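/- Let p : [0,1] → ℝ be a polynomial of degree at most 3. Then: (1) L_n(p) is increasing in n if and only if p(0) ≤ min{p(1), p(1/2)}; (2) L_n(p) is decreasing in n if and only if p(0) ≥ max{p(1), p(1/2)}; (3) R_n(p) is increasing in n if and only if p(1) ≤ min{p(0), p(1/2)}; (4) R_n(p) is decreasing in n if and only if p(1) ≥ max{p(0), p(1/2)}. -/

import Mathlib

open Finset

/-- Left Riemann sum of `f` over the uniform partition of `[0,1]` into `n` parts. -/
noncomputable def riemannL (f : ℝ → ℝ) (n : ℕ) : ℝ :=
  (1 / (n : ℝ)) * ∑ k ∈ Finset.range n, f ((k : ℝ) / (n : ℝ))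

/-- Right Riemann sum of `f` over the uniform partition of `[0,1]` into `n` parts. -/
noncomputable def riemannR (f : ℝ → ℝ) (n : ℕ) : ℝ :=
  (1 / (n : ℝ)) * ∑ k ∈ Finset.Icc 1 n, f ((k : ℝ) / (n : ℝ))

lemma sum_id' (n : ℕ) : ∑ k ∈ Finset.range n, (k:ℝ) = n*(n-1)/2 := by
  induction n with
  | zero => simp
  | succ m ih => rw [Finset.sum_range_succ, ih]; push_cast; ring

lemma sum_sq' (n : ℕ) : ∑ k ∈ Finset.range n, (k:ℝ)^2 = n*(n-1)*(2*n-1)/6 := by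
  induction n with
  | zero => simp
  | succ m ih => rw [Finset.sum_range_succ, ih]; push_cast; ring

lemma sum_cube' (n : ℕ) : ∑ k ∈ Finset.range n, (k:ℝ)^3 = n^2*(n-1)^2/4 := by
  induction n with
  | zero => simp
  | succ m ih => rw [Finset.sum_range_succ, ih]; push_cast; ring

lemma eval_cubic (p : Polynomial ℝ) (hp : p.natDegree ≤ 3) (x : ℝ) :
    p.eval x = p.coeff 0 + p.coeff 1 * x + p.coeff 2 * x^2 + p.coeff 3 * x^3 := by
  rw [Polynomial.eval_eq_sum_range' (lt_of_le_of_lt hp (by norm_num : (3:ℕ) < 4))]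
  simp [Finset.sum_range_succ]

lemma split_sum' (α β γ δ : ℝ) (n : ℕ) :
    ∑ k ∈ Finset.range n, (α + β*(k:ℝ) + γ*(k:ℝ)^2 + δ*(k:ℝ)^3)
      = (n:ℝ)*α + β * (∑ k ∈ Finset.range n, (k:ℝ))
        + γ * (∑ k ∈ Finset.range n, (k:ℝ)^2) + δ * (∑ k ∈ Finset.range n, (k:ℝ)^3) := by
  rw [Finset.sum_add_distrib, Finset.sum_add_distrib, Finset.sum_add_distrib,
    Finset.sum_const, ← Finset.mul_sum, ← Finset.mul_sum, ← Finset.mul_sum]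
  simp [nsmul_eq_mul]

lemma L_formula' (a b c d : ℝ) (f : ℝ → ℝ)
    (hf : ∀ x : ℝ, f x = a + b*x + c*x^2 + d*x^3) (n : ℕ) (hn : 1 ≤ n) :
    riemannL f n = (a + b/2 + c/3 + d/4) + (-(b+c+d)/2)/(n:ℝ) + (c/6 + d/4)/(n:ℝ)^2 := by
  have hN0 : (0:ℝ) < (n:ℝ) := by exact_mod_cast hn
  have hNe : (n:ℝ) ≠ 0 := ne_of_gt hN0
  unfold riemannL
  have hs : ∑ k ∈ Finset.range n, f ((k:ℝ)/(n:ℝ))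
      = ∑ k ∈ Finset.range n,
          (a + (b/(n:ℝ))*(k:ℝ) + (c/(n:ℝ)^2)*(k:ℝ)^2 + (d/(n:ℝ)^3)*(k:ℝ)^3) := by
    refine Finset.sum_congr rfl fun k _ => ?_
    rw [hf]; field_simp; try ring
  rw [hs, split_sum', sum_id', sum_sq', sum_cube']
  field_simp
  ring

lemma R_formula' (a b c d : ℝ) (f : ℝ → ℝ)
    (hf : ∀ x : ℝ, f x = a + b*x + c*x^2 + d*x^3) (n : ℕ) (hn : 1 ≤ n) :
    riemannR f n = (a + b/2 + c/3 + d/4) + ((b+c+d)/2)/(n:ℝ) + (c/6 + d/4)/(n:ℝ)^2 := by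
  have hN0 : (0:ℝ) < (n:ℝ) := by exact_mod_cast hn
  have hNe : (n:ℝ) ≠ 0 := ne_of_gt hN0
  unfold riemannR
  rw [← Finset.Ico_add_one_right_eq_Icc, Finset.sum_Ico_eq_sum_range, Nat.add_sub_cancel]
  have hs : ∑ k ∈ Finset.range n, f (((1+k:ℕ):ℝ)/(n:ℝ))
      = ∑ k ∈ Finset.range n,
          ((a + b/(n:ℝ) + c/(n:ℝ)^2 + d/(n:ℝ)^3)
            + (b/(n:ℝ) + 2*c/(n:ℝ)^2 + 3*d/(n:ℝ)^3)*(k:ℝ)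
            + (c/(n:ℝ)^2 + 3*d/(n:ℝ)^3)*(k:ℝ)^2 + (d/(n:ℝ)^3)*(k:ℝ)^3) := by
    refine Finset.sum_congr rfl fun k _ => ?_
    rw [hf]; push_cast; field_simp; try ring
  rw [hs, split_sum', sum_id', sum_sq', sum_cube']
  field_simp
  ring

lemma quad_key' (A B : ℝ) :
    (∀ n : ℕ, 1 ≤ n → A*((n:ℝ)*(n+1)) + B*(2*n+1) ≤ 0) ↔ (A ≤ 0 ∧ 2*A + 3*B ≤ 0) := by
  constructor
  · intro h
    constructor
    · by_contra hA
      push_neg at hA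
      obtain ⟨n, hn⟩ := exists_nat_ge ((3*|B|+1)/A)
      have h1 := h (n+1) (Nat.le_add_left 1 n)
      have hm1 : (1:ℝ) ≤ ((n+1:ℕ):ℝ) := by exact_mod_cast Nat.le_add_left 1 n
      have hge : (3*|B|+1)/A ≤ ((n+1:ℕ):ℝ) := by push_cast; linarith
      have hAm : 3*|B|+1 ≤ A*((n+1:ℕ):ℝ) := by
        rw [div_le_iff₀ hA] at hge; linarith
      set m : ℝ := ((n+1:ℕ):ℝ) with hm
      push_cast at h1
      nlinarith [abs_nonneg B, neg_abs_le B, le_abs_self B,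
        mul_le_mul_of_nonneg_right hAm (by linarith : (0:ℝ) ≤ m+1)]
    · have := h 1 le_rfl; push_cast at this; linarith
  · rintro ⟨hA, hAB⟩ n hn
    have hn' : (1:ℝ) ≤ n := by exact_mod_cast hn
    nlinarith [mul_nonpos_of_nonpos_of_nonneg hA
        (mul_nonneg (by linarith : (0:ℝ) ≤ 3*(n:ℝ)+2) (by linarith : (0:ℝ) ≤ (n:ℝ)-1)),
      mul_nonpos_of_nonpos_of_nonneg hAB (by linarith : (0:ℝ) ≤ 2*(n:ℝ)+1)]

lemma key' (I A B : ℝ) (L : ℕ → ℝ) (hL : ∀ n : ℕ, 1 ≤ n → L n = I + A/(n:ℝ) + B/(n:ℝ)^2) :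
    (∀ n : ℕ, 1 ≤ n → L n ≤ L (n+1)) ↔ (A ≤ 0 ∧ 2*A + 3*B ≤ 0) := by
  rw [← quad_key']
  apply forall_congr'
  intro n
  apply imp_congr_right
  intro hn
  have hN : (1:ℝ) ≤ (n:ℝ) := by exact_mod_cast hn
  have hN0 : (0:ℝ) < (n:ℝ) := by linarith
  rw [hL n hn, hL (n+1) (Nat.le_add_left 1 n)]
  push_cast
  set N : ℝ := (n:ℝ)
  have hden : (0:ℝ) < N^2*(N+1)^2 := by positivity
  have keyeq : (I + A/(N+1) + B/(N+1)^2) - (I + A/N + B/N^2)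
      = -(A*(N*(N+1)) + B*(2*N+1))/(N^2*(N+1)^2) := by
    field_simp
    ring
  constructor
  · intro h
    have h2 : 0 ≤ -(A*(N*(N+1)) + B*(2*N+1))/(N^2*(N+1)^2) := by rw [← keyeq]; linarith
    rw [le_div_iff₀ hden] at h2
    linarith
  · intro h
    have h2 : 0 ≤ -(A*(N*(N+1)) + B*(2*N+1))/(N^2*(N+1)^2) :=
      div_nonneg (by linarith) (le_of_lt hden)
    linarith [keyeq]

theorem stmt11 (p : Polynomial ℝ) (hp : p.natDegree ≤ 3) :
    ((∀ n : ℕ, 1 ≤ n →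
        riemannL (fun x => p.eval x) n ≤ riemannL (fun x => p.eval x) (n + 1)) ↔
      p.eval 0 ≤ min (p.eval 1) (p.eval (1 / 2))) ∧
    ((∀ n : ℕ, 1 ≤ n →
        riemannL (fun x => p.eval x) (n + 1) ≤ riemannL (fun x => p.eval x) n) ↔
      max (p.eval 1) (p.eval (1 / 2)) ≤ p.eval 0) ∧
    ((∀ n : ℕ, 1 ≤ n →
        riemannR (fun x => p.eval x) n ≤ riemannR (fun x => p.eval x) (n + 1)) ↔
      p.eval 1 ≤ min (p.eval 0) (p.eval (1 / 2))) ∧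
    ((∀ n : ℕ, 1 ≤ n →
        riemannR (fun x => p.eval x) (n + 1) ≤ riemannR (fun x => p.eval x) n) ↔
      max (p.eval 0) (p.eval (1 / 2)) ≤ p.eval 1) := by
  set a := p.coeff 0 with ha
  set b := p.coeff 1 with hb
  set c := p.coeff 2 with hc
  set d := p.coeff 3 with hd
  have hev : ∀ x : ℝ, (fun x => p.eval x) x = a + b*x + c*x^2 + d*x^3 :=
    fun x => eval_cubic p hp x
  have h0 : p.eval 0 = a := by have := hev 0; simpa using this
  have h1 : p.eval 1 = a + b + c + d := by have := hev 1; simp at this; linarith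
  have hh : p.eval (1/2) = a + b/2 + c/4 + d/8 := by
    have := hev (1/2); norm_num at this; linarith
  set I : ℝ := a + b/2 + c/3 + d/4
  set AL : ℝ := -(b+c+d)/2
  set AR : ℝ := (b+c+d)/2
  set B : ℝ := c/6 + d/4
  have hLf : ∀ n : ℕ, 1 ≤ n →
      riemannL (fun x => p.eval x) n = I + AL/(n:ℝ) + B/(n:ℝ)^2 :=
    fun n hn => L_formula' a b c d _ hev n hn
  have hRf : ∀ n : ℕ, 1 ≤ n →
      riemannR (fun x => p.eval x) n = I + AR/(n:ℝ) + B/(n:ℝ)^2 :=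
    fun n hn => R_formula' a b c d _ hev n hn
  have hLf' : ∀ n : ℕ, 1 ≤ n →
      (fun n => -(riemannL (fun x => p.eval x) n)) n = -I + (-AL)/(n:ℝ) + (-B)/(n:ℝ)^2 := by
    intro n hn; simp only; rw [hLf n hn]; ring
  have hRf' : ∀ n : ℕ, 1 ≤ n →
      (fun n => -(riemannR (fun x => p.eval x) n)) n = -I + (-AR)/(n:ℝ) + (-B)/(n:ℝ)^2 := by
    intro n hn; simp only; rw [hRf n hn]; ring
  have negiff : ∀ L : ℕ → ℝ, (∀ n : ℕ, 1 ≤ n → L (n+1) ≤ L n) ↔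
      (∀ n : ℕ, 1 ≤ n → (fun n => -(L n)) n ≤ (fun n => -(L n)) (n+1)) := by
    intro L
    exact forall_congr' fun n => imp_congr_right fun _ => (neg_le_neg_iff).symm
  refine ⟨?_, ?_, ?_, ?_⟩
  · rw [key' I AL B _ hLf, le_min_iff, h0, h1, hh]
    constructor
    · rintro ⟨u, v⟩
      constructor <;> simp only [AL, B] at u v <;> linarith
    · rintro ⟨u, v⟩
      constructor <;> simp only [AL, B] <;> linarith
  · rw [negiff, key' (-I) (-AL) (-B) _ hLf', max_le_iff, h0, h1, hh]
    constructor
    · rintro ⟨u, v⟩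
      constructor <;> simp only [AL, B] at u v <;> linarith
    · rintro ⟨u, v⟩
      constructor <;> simp only [AL, B] <;> linarith
  · rw [key' I AR B _ hRf, le_min_iff, h0, h1, hh]
    constructor
    · rintro ⟨u, v⟩
      constructor <;> simp only [AR, B] at u v <;> linarith
    · rintro ⟨u, v⟩
      constructor <;> simp only [AR, B] <;> linarith
  · rw [negiff, key' (-I) (-AR) (-B) _ hRf', max_le_iff, h0, h1, hh]
    constructor
    · rintro ⟨u, v⟩
      constructor <;> simp only [AR, B] at u v <;> linarith
    · rintro ⟨u, v⟩
      constructor <;> simp only [AR, B] <;> linarith
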